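/- Let k̂_0, …, k̂_{n−1} > 0 be positive reals. Then every point v of the Vandermonde simplex V_g(z) := conv( g, p^{(0)}, p^{(0)} + (k̂_1/k̂_0) p^{(1)}, …, Σ_{i=0}^{n−1} (k̂_i/k̂_0) p^{(i)} ) satisfies ‖v − g‖ ≤ γ ‖z − ğ‖, where γ = √n · max(k̂_0, …, k̂_{n−1}) / k̂_0, z = (p^{(0)}, …, p^{(n−1)}) ∈ (ℝ^d)^n, and ğ = (g, 0, …, 0). -/
import Mathlib

theorem stmt5 {n d : ℕ} (hn : 0 < n)
    (k : Fin n → ℝ) (hk : ∀ i, 0 < k i)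
    (g : EuclideanSpace ℝ (Fin d)) (p : Fin n → EuclideanSpace ℝ (Fin d))
    (z gbar : PiLp 2 (fun _ : Fin n => EuclideanSpace ℝ (Fin d)))
    (hz : ∀ i, z i = p i)
    (hgbar : ∀ i : Fin n, gbar i = if (i : ℕ) = 0 then g else 0)
    (V : Fin (n + 1) → EuclideanSpace ℝ (Fin d))
    (hV0 : V 0 = g)
    (hV : ∀ j : Fin (n + 1), 0 < (j : ℕ) →
      V j = ∑ i ∈ Finset.univ.filter (fun i : Fin n => (i : ℕ) < (j : ℕ)),
              (k i / k ⟨0, hn⟩) • p i) :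
    ∀ v ∈ convexHull ℝ (Set.range V),
      ‖v - g‖ ≤ Real.sqrt n *
          (Finset.univ.sup' ⟨⟨0, hn⟩, Finset.mem_univ _⟩ k / k ⟨0, hn⟩) * ‖z - gbar‖ := by
  set i0 : Fin n := ⟨0, hn⟩ with hi0
  set k0 : ℝ := k i0 with hk0def
  set M : ℝ := Finset.univ.sup' ⟨i0, Finset.mem_univ _⟩ k with hM
  have hk0 : 0 < k0 := hk i0
  have hMk0 : k0 ≤ M := Finset.le_sup' k (Finset.mem_univ i0)
  have hMpos : 0 < M := lt_of_lt_of_le hk0 hMk0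
  set w : Fin n → EuclideanSpace ℝ (Fin d) := fun i => z i - gbar i with hw
  set C : ℝ := Real.sqrt n * (M / k0) * ‖z - gbar‖ with hC
  have hCnn : 0 ≤ C := by positivity
  -- sum of norms ≤ √n * ‖z - gbar‖
  have hsum : ∑ i, ‖w i‖ ≤ Real.sqrt n * ‖z - gbar‖ := by
    have hnormsq : ‖z - gbar‖ ^ 2 = ∑ i, ‖w i‖ ^ 2 := by
      rw [PiLp.norm_sq_eq_of_L2]
      simp [hw, PiLp.sub_apply]
    have h1 : (∑ i, ‖w i‖) ^ 2 ≤ (n : ℝ) * ∑ i, ‖w i‖ ^ 2 := by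
      simpa using sq_sum_le_card_mul_sum_sq (s := Finset.univ) (f := fun i => ‖w i‖)
    have h2 : (∑ i, ‖w i‖) ^ 2 ≤ (Real.sqrt n * ‖z - gbar‖) ^ 2 := by
      rw [mul_pow, Real.sq_sqrt (by positivity), hnormsq]; exact h1
    have hnn : 0 ≤ ∑ i, ‖w i‖ := Finset.sum_nonneg fun i _ => norm_nonneg _
    calc ∑ i, ‖w i‖ = Real.sqrt ((∑ i, ‖w i‖) ^ 2) := (Real.sqrt_sq hnn).symm
      _ ≤ Real.sqrt ((Real.sqrt n * ‖z - gbar‖) ^ 2) := Real.sqrt_le_sqrt h2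
      _ = Real.sqrt n * ‖z - gbar‖ := Real.sqrt_sq (by positivity)
  -- each vertex is within C of g
  have hvert : ∀ j : Fin (n + 1), ‖V j - g‖ ≤ C := by
    intro j
    rcases Nat.eq_zero_or_pos (j : ℕ) with hj | hj
    · have : j = 0 := Fin.ext hj
      simp [this, hV0, hCnn]
    · set s := Finset.univ.filter (fun i : Fin n => (i : ℕ) < (j : ℕ)) with hs
      have h0s : i0 ∈ s := by
        simp [hs, hi0]
        exact hj
      have hc0 : k i0 / k0 = 1 := div_self (ne_of_gt hk0)
      have hkey : V j - g = ∑ i ∈ s, (k i / k0) • w i := by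
        rw [hV j hj]
        have : ∑ i ∈ s, (k i / k0) • w i
            = ∑ i ∈ s, (k i / k0) • p i - ∑ i ∈ s, (k i / k0) • gbar i := by
          rw [← Finset.sum_sub_distrib]
          refine Finset.sum_congr rfl fun i _ => ?_
          rw [hw]; simp [hz i, smul_sub]
        rw [this]
        have hg : ∑ i ∈ s, (k i / k0) • gbar i = g := by
          have : ∀ i ∈ s, (k i / k0) • gbar i
              = if i = i0 then (k i / k0) • g else 0 := by
            intro i _
            rw [hgbar i]
            by_cases h : i = i0
            · simp [h, hi0]
            · have : (i : ℕ) ≠ 0 := fun hh => h (Fin.ext (by simp [hi0, hh]))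
              simp [this, h]
          rw [Finset.sum_congr rfl this, Finset.sum_ite_eq' s i0 (fun i => (k i / k0) • g),
            if_pos h0s, hc0, one_smul]
        rw [hg]
      rw [hkey]
      calc ‖∑ i ∈ s, (k i / k0) • w i‖ ≤ ∑ i ∈ s, ‖(k i / k0) • w i‖ := norm_sum_le _ _
        _ = ∑ i ∈ s, (k i / k0) * ‖w i‖ := by
            refine Finset.sum_congr rfl fun i _ => ?_
            rw [norm_smul, Real.norm_eq_abs, abs_of_pos (div_pos (hk i) hk0)]
        _ ≤ ∑ i ∈ s, (M / k0) * ‖w i‖ := by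
            refine Finset.sum_le_sum fun i _ => ?_
            refine mul_le_mul_of_nonneg_right ?_ (norm_nonneg _)
            gcongr
            exact Finset.le_sup' k (Finset.mem_univ i)
        _ ≤ ∑ i, (M / k0) * ‖w i‖ := by
            refine Finset.sum_le_sum_of_subset_of_nonneg (Finset.subset_univ s)
              fun i _ _ => by positivity
        _ = (M / k0) * ∑ i, ‖w i‖ := by rw [Finset.mul_sum]
        _ ≤ (M / k0) * (Real.sqrt n * ‖z - gbar‖) :=
            mul_le_mul_of_nonneg_left hsum (by positivity)
        _ = C := by rw [hC]; ring
  intro v hv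
  have hsub : convexHull ℝ (Set.range V) ⊆ Metric.closedBall g C := by
    apply convexHull_min
    · rintro x ⟨j, rfl⟩
      rw [Metric.mem_closedBall, dist_eq_norm]
      exact hvert j
    · exact convex_closedBall g C
  have := hsub hv
  rw [Metric.mem_closedBall, dist_eq_norm] at this
  exact this
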